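/- For every integer k ≥ 4, the undirected repetition threshold satisfies URT(k) ≥ (k−1)/(k−2). -/

import Mathlib

/-- `x` is a (finite, contiguous) factor of the infinite word `w`. -/
def InfFactor {A : Type*} (x : List A) (w : ℕ → A) : Prop :=
  ∃ i : ℕ, x = (List.range x.length).map fun j => w (i + j)

/-- `z` is an undirected `r`-power: `z = x ++ y ++ x'` with `x` nonempty,
`x' = x` or `x' = x.reverse`, and `|x y x'| / |x y| = r`. -/
def IsUndirectedPow {A : Type*} (r : ℚ) (z : List A) : Prop :=
  ∃ x y x' : List A, z = x ++ y ++ x' ∧ x ≠ [] ∧ (x' = x ∨ x' = x.reverse) ∧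
    (z.length : ℚ) = r * ((x.length : ℚ) + (y.length : ℚ))

/-- `z` is an ordinary `r`-power: `z = x ++ y ++ x` with `x` nonempty and `|x y x| / |x y| = r`. -/
def IsOrdinaryPow {A : Type*} (r : ℚ) (z : List A) : Prop :=
  ∃ x y : List A, z = x ++ y ++ x ∧ x ≠ [] ∧
    (z.length : ℚ) = r * ((x.length : ℚ) + (y.length : ℚ))

/-- The infinite word `w` is undirected `α`-free: no factor of `w` is an undirected
`r`-power with rational `r ≥ α` (where `1 < r ≤ 2`). -/
def UndirectedFree {A : Type*} (α : ℝ) (w : ℕ → A) : Prop :=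
  ∀ z : List A, InfFactor z w →
    ∀ r : ℚ, 1 < r → r ≤ 2 → α ≤ (r : ℝ) → ¬ IsUndirectedPow r z

/-- The infinite word `w` is undirected `α⁺`-free: no factor of `w` is an undirected
`r`-power with rational `r > α` (where `1 < r ≤ 2`). -/
def UndirectedPlusFree {A : Type*} (α : ℝ) (w : ℕ → A) : Prop :=
  ∀ z : List A, InfFactor z w →
    ∀ r : ℚ, 1 < r → r ≤ 2 → α < (r : ℝ) → ¬ IsUndirectedPow r z

/-- The infinite word `w` is (ordinary) `α`-free. -/
def OrdinaryFree {A : Type*} (α : ℝ) (w : ℕ → A) : Prop :=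
  ∀ z : List A, InfFactor z w →
    ∀ r : ℚ, 1 < r → r ≤ 2 → α ≤ (r : ℝ) → ¬ IsOrdinaryPow r z

/-- The infinite word `w` is (ordinary) `α⁺`-free. -/
def OrdinaryPlusFree {A : Type*} (α : ℝ) (w : ℕ → A) : Prop :=
  ∀ z : List A, InfFactor z w →
    ∀ r : ℚ, 1 < r → r ≤ 2 → α < (r : ℝ) → ¬ IsOrdinaryPow r z

/-- The undirected repetition threshold for `k` letters: the infimum of the set of
rationals `r ∈ (1, 2]` such that undirected `r`-powers are `k`-avoidable. -/
noncomputable def URT (k : ℕ) : ℝ :=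
  sInf {a : ℝ | ∃ r : ℚ, a = (r : ℝ) ∧ 1 < r ∧ r ≤ 2 ∧
    ∃ w : ℕ → Fin k, UndirectedFree (r : ℝ) w}

/-- The (ordinary) repetition threshold for `k` letters. -/
noncomputable def RT (k : ℕ) : ℝ :=
  sInf {a : ℝ | ∃ r : ℚ, a = (r : ℝ) ∧ 1 < r ∧ r ≤ 2 ∧
    ∃ w : ℕ → Fin k, OrdinaryFree (r : ℝ) w}

namespace URTAux


variable {A : Type*}

/-- The factor of `w` of length `len` starting at `a`. -/
def seg (w : ℕ → A) (a len : ℕ) : List A := (List.range len).map fun j => w (a + j)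

lemma seg_def (w : ℕ → A) (a len : ℕ) :
    seg w a len = (List.range len).map fun j => w (a + j) := rfl

@[simp] lemma seg_length (w : ℕ → A) (a len : ℕ) : (seg w a len).length = len := by
  simp [seg]

lemma seg_append (w : ℕ → A) (a m n : ℕ) :
    seg w a (m + n) = seg w a m ++ seg w (a + m) n := by
  unfold seg
  rw [List.range_add, List.map_append, List.map_map]
  congr 1
  apply List.map_congr_left
  intro j _
  simp [Function.comp]
  ring_nf

lemma seg_one (w : ℕ → A) (a : ℕ) : seg w a 1 = [w a] := by
  simp [seg, List.range_succ]

lemma seg_two (w : ℕ → A) (a : ℕ) : seg w a 2 = [w a, w (a + 1)] := by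
  simp [seg, List.range_succ]

lemma seg_ne_nil (w : ℕ → A) (a p : ℕ) (hp : 1 ≤ p) : seg w a p ≠ [] := by
  apply List.ne_nil_of_length_pos
  simp [hp]
  omega

lemma seg_infFactor (w : ℕ → A) (a len : ℕ) : InfFactor (seg w a len) w :=
  ⟨a, by simp [seg]⟩

lemma pointwise_of_eq {w : ℕ → A} {b a L : ℕ} (h : seg w b L = seg w a L) :
    ∀ j, j < L → w (b + j) = w (a + j) := by
  intro j hj
  have := congrArg (fun l => l[j]?) h
  simpa [seg, List.getElem?_map, List.getElem?_range hj] using this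

lemma pointwise_of_rev {w : ℕ → A} {b a L : ℕ} (h : seg w b L = (seg w a L).reverse) :
    ∀ j, j < L → w (b + j) = w (a + (L - 1 - j)) := by
  intro j hj
  have hrev : (seg w a L).reverse[j]? = (seg w a L)[L - 1 - j]? := by
    rw [List.getElem?_reverse (by simp [hj])]
    simp
  have := (congrArg (fun l => l[j]?) h).trans hrev
  have h2 : L - 1 - j < L := by omega
  simpa [seg, List.getElem?_map, List.getElem?_range hj, List.getElem?_range h2] using this



/-- The Thue–Morse sequence (parity of binary digit sum). -/
def tm : ℕ → Bool
  | 0 => false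
  | n + 1 => ((n + 1) % 2 == 1).xor (tm ((n + 1) / 2))
decreasing_by omega

lemma tm_even (m : ℕ) : tm (2 * m) = tm m := by
  match m with
  | 0 => rfl
  | m + 1 =>
    have h : 2 * (m + 1) = (2 * m + 1) + 1 := by omega
    rw [h, tm]
    have h1 : (2 * m + 1 + 1) % 2 = 0 := by omega
    have h2 : (2 * m + 1 + 1) / 2 = m + 1 := by omega
    simp [h1, h2]

lemma tm_odd (m : ℕ) : tm (2 * m + 1) = !tm m := by
  rw [show 2 * m + 1 = (2 * m) + 1 from rfl, tm]
  have h1 : (2 * m + 1) % 2 = 1 := by omega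
  have h2 : (2 * m + 1) / 2 = m := by omega
  simp [h1, h2]

/-- First difference of Thue–Morse. -/
def dtm (n : ℕ) : Bool := (tm n).xor (tm (n + 1))

lemma dtm_even (a : ℕ) : dtm (2 * a) = true := by
  unfold dtm
  rw [tm_even, tm_odd]
  simp

lemma dtm_odd (a : ℕ) : dtm (2 * a + 1) = !(dtm a) := by
  unfold dtm
  rw [tm_odd, show 2 * a + 1 + 1 = 2 * (a + 1) from by omega, tm_even]
  cases h1 : tm a <;> cases h2 : tm (a + 1) <;> simp [h1, h2]

/-- Thue–Morse is overlap-free. -/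
lemma tm_overlap_free : ∀ L, 1 ≤ L → ∀ i, ¬ (∀ j, j ≤ L → tm (i + j) = tm (i + j + L)) := by
  intro L
  induction L using Nat.strong_induction_on with
  | _ L IH =>
    intro hL i H
    rcases Nat.even_or_odd L with ⟨L', hL'⟩ | ⟨L', hL'⟩
    · -- L = L' + L'
      have hL'1 : 1 ≤ L' := by omega
      apply IH L' (by omega) hL'1 (i / 2)
      intro s hs
      rcases Nat.even_or_odd i with ⟨a, ha⟩ | ⟨a, ha⟩
      · have e : tm (2 * (i / 2 + s)) = tm (2 * (i / 2 + s + L')) := by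
          have := H (2 * s) (by omega)
          convert this using 2 <;> omega
        rwa [tm_even, tm_even] at e
      · have e : tm (2 * (i / 2 + s) + 1) = tm (2 * (i / 2 + s + L') + 1) := by
          have := H (2 * s) (by omega)
          convert this using 2 <;> omega
        rw [tm_odd, tm_odd] at e
        exact Bool.not_inj e
    · -- L = 2 * L' + 1
      rcases Nat.eq_or_lt_of_le hL with h1 | h1
      · -- L = 1
        rcases Nat.even_or_odd i with ⟨a, ha⟩ | ⟨a, ha⟩
        · have e : tm (2 * a) = tm (2 * a + 1) := by
            have := H 0 (by omega)
            convert this using 2 <;> omega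
          rw [tm_even, tm_odd] at e
          simp at e
        · have e : tm (2 * (a + 1)) = tm (2 * (a + 1) + 1) := by
            have := H 1 (by omega)
            convert this using 2 <;> omega
          rw [tm_even, tm_odd] at e
          simp at e
      · -- L ≥ 3 (odd)
        have hd : ∀ j, j + 1 ≤ L → dtm (i + j) = dtm (i + j + L) := by
          intro j hj
          unfold dtm
          have h0 := H j (by omega)
          have h2 : tm (i + j + 1) = tm (i + j + L + 1) := by
            have := H (j + 1) (by omega)
            convert this using 2 <;> omega
          rw [h0, h2]
        rcases Nat.even_or_odd i with ⟨a, ha⟩ | ⟨a, ha⟩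
        · -- i = 2a even, i + L odd
          have d0 : dtm (2 * a) = dtm (2 * (a + L') + 1) := by
            have := hd 0 (by omega)
            convert this using 2 <;> omega
          have d2 : dtm (2 * (a + 1)) = dtm (2 * (a + L' + 1) + 1) := by
            have := hd 2 (by omega)
            convert this using 2 <;> omega
          rw [dtm_even, dtm_odd] at d0
          rw [dtm_even, dtm_odd] at d2
          rcases Nat.even_or_odd (a + L') with ⟨c, hc⟩ | ⟨c, hc⟩
          · rw [show a + L' = 2 * c from by omega, dtm_even] at d0
            simp at d0
          · rw [show a + L' + 1 = 2 * (c + 1) from by omega, dtm_even] at d2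
            simp at d2
        · -- i = 2a + 1 odd, i + L even
          have d0 : dtm (2 * a + 1) = dtm (2 * (a + L' + 1)) := by
            have := hd 0 (by omega)
            convert this using 2 <;> omega
          have d2 : dtm (2 * (a + 1) + 1) = dtm (2 * (a + L' + 2)) := by
            have := hd 2 (by omega)
            convert this using 2 <;> omega
          rw [dtm_odd, dtm_even] at d0
          rw [dtm_odd, dtm_even] at d2
          rcases Nat.even_or_odd a with ⟨c, hc⟩ | ⟨c, hc⟩
          · rw [show a = 2 * c from by omega, dtm_even] at d0
            simp at d0
          · rw [show a + 1 = 2 * (c + 1) from by omega, dtm_even] at d2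
            simp at d2



/-- Pair-coding of the Thue–Morse word: a square-free word over 4 letters. -/
noncomputable def tmPair (n : ℕ) : ℕ := (cond (tm n) 2 0) + (cond (tm (n + 1)) 1 0)

lemma tmPair_lt (n : ℕ) : tmPair n < 4 := by
  unfold tmPair
  cases tm n <;> cases tm (n + 1) <;> simp

lemma tmPair_inj {m n : ℕ} (h : tmPair m = tmPair n) :
    tm m = tm n ∧ tm (m + 1) = tm (n + 1) := by
  unfold tmPair at h
  cases h1 : tm m <;> cases h2 : tm (m + 1) <;> cases h3 : tm n <;> cases h4 : tm (n + 1) <;>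
    simp [h1, h2, h3, h4] at h ⊢

/-- For every `k ≥ 4` there is an undirected `2`-free word over `Fin k`. -/
lemma exists_undirected_two_free (k : ℕ) (hk : 4 ≤ k) :
    ∃ w : ℕ → Fin k, UndirectedFree (((2 : ℚ) : ℝ)) w := by
  refine ⟨fun n => ⟨tmPair n, lt_of_lt_of_le (tmPair_lt n) hk⟩, ?_⟩
  set w : ℕ → Fin k := fun n => ⟨tmPair n, lt_of_lt_of_le (tmPair_lt n) hk⟩ with hw
  intro z hz r h1 h2 h3 hpow
  have hr2 : r = 2 := le_antisymm h2 (by exact_mod_cast h3)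
  subst hr2
  obtain ⟨x, y, x', hzeq, hxne, hx', hlen⟩ := hpow
  have hx'len : x'.length = x.length := by
    rcases hx' with h | h <;> simp [h]
  have hzlen : z.length = x.length + y.length + x'.length := by simp [hzeq]; omega
  have hlen' : (z.length : ℚ) = 2 * ((x.length : ℚ) + (y.length : ℚ)) := hlen
  have hlen'' : z.length = 2 * (x.length + y.length) := by exact_mod_cast hlen'
  have hy : y = [] := List.length_eq_zero_iff.mp (by omega)
  subst hy
  set p := x.length with hp
  have hp1 : 1 ≤ p := List.length_pos_iff.mpr hxne
  obtain ⟨i, hi⟩ := hz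
  have hzseg : x ++ x' = seg w i p ++ seg w (i + p) p := by
    have h5 : z = seg w i z.length := by rw [seg_def]; exact hi
    have h6 : z.length = p + p := by omega
    calc x ++ x' = z := by rw [hzeq]; simp
    _ = seg w i (p + p) := by rw [h5, h6]
    _ = seg w i p ++ seg w (i + p) p := seg_append w i p p
  obtain ⟨hx1, hx2⟩ := List.append_inj hzseg (by simp [hp])
  have hcomp : ∀ m n : ℕ, w m = w n → tm m = tm n ∧ tm (m + 1) = tm (n + 1) := by
    intro m n hmn
    apply tmPair_inj
    exact congrArg Fin.val hmn
  rcases hx' with hcase | hcase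
  · -- straight square
    have hseq : seg w (i + p) p = seg w i p := by rw [← hx2, hcase, hx1]
    have hpt := pointwise_of_eq hseq
    apply tm_overlap_free p hp1 i
    intro j hj
    rcases Nat.lt_or_ge j p with hjp | hjp
    · have hthis := (hcomp _ _ (hpt j hjp)).1
      rw [show i + j + p = i + p + j from by omega]
      exact hthis.symm
    · have hjep : j = p := by omega
      subst hjep
      have := (hcomp _ _ (hpt (p - 1) (by omega))).2
      -- tm (i+p+(p-1)+1) = tm (i+(p-1)+1)
      have e1 : i + p + (p - 1) + 1 = i + p + p := by omega
      have e2 : i + (p - 1) + 1 = i + p := by omega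
      rw [e1, e2] at this
      exact this.symm
  · -- reversed square
    have hseq : seg w (i + p) p = (seg w i p).reverse := by rw [← hx2, hcase, hx1]
    have hpt := pointwise_of_rev hseq
    have h0 := hcomp _ _ (hpt 0 (by omega))
    -- h0.1 : tm (i+p+0) = tm (i + (p-1-0)), h0.2 : tm (i+p+0+1) = tm (i+(p-1-0)+1)
    apply tm_overlap_free 1 (by omega) (i + (p - 1))
    intro j hj
    rcases Nat.le_one_iff_eq_zero_or_eq_one.mp hj with hj0 | hj1
    · subst hj0
      have := h0.1
      have e1 : i + p + 0 = i + p := by omega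
      have e2 : i + (p - 1 - 0) = i + (p - 1) := by omega
      rw [e1, e2] at this
      rw [show i + (p - 1) + 0 + 1 = i + p from by omega]
      exact this.symm
    · subst hj1
      have := h0.2
      have e1 : i + p + 0 + 1 = i + p + 1 := by omega
      have e2 : i + (p - 1 - 0) + 1 = i + p := by omega
      rw [e1, e2] at this
      rw [show i + (p - 1) + 1 + 1 = i + p + 1 from by omega,
          show i + (p - 1) + 1 = i + p from by omega]
      exact this.symm

/-- A word avoiding undirected powers of exponent `≥ r` has no repeated block of
length `p` at distance `d ≥ p` whenever `(d+p)/d ≥ r`. -/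
lemma no_pow {k : ℕ} {w : ℕ → Fin k} {r : ℚ} (hfree : UndirectedFree (r : ℝ) w)
    (p d i : ℕ) (hp : 1 ≤ p) (hpd : p ≤ d)
    (hr : (r : ℝ) ≤ ((d : ℝ) + (p : ℝ)) / (d : ℝ))
    (hmatch : seg w (i + d) p = seg w i p ∨ seg w (i + d) p = (seg w i p).reverse) :
    False := by
  have hd : 1 ≤ d := le_trans hp hpd
  have hdq : (0 : ℚ) < (d : ℚ) := by exact_mod_cast hd
  set r' : ℚ := ((d : ℚ) + (p : ℚ)) / (d : ℚ) with hr'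
  have h1 : 1 < r' := by
    rw [hr', lt_div_iff₀ hdq]
    have : (1 : ℚ) ≤ (p : ℚ) := by exact_mod_cast hp
    linarith
  have h2 : r' ≤ 2 := by
    rw [hr', div_le_iff₀ hdq]
    have : (p : ℚ) ≤ (d : ℚ) := by exact_mod_cast hpd
    linarith
  have h3 : (r : ℝ) ≤ (r' : ℝ) := by
    rw [hr']
    push_cast
    exact hr
  apply hfree (seg w i (d + p)) ⟨i, by rw [seg_def]; simp⟩ r' h1 h2 h3
  refine ⟨seg w i p, seg w (i + p) (d - p), seg w (i + d) p, ?_, seg_ne_nil w i p hp, hmatch, ?_⟩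
  · have e1 : d + p = p + ((d - p) + p) := by omega
    rw [e1, seg_append, seg_append]
    rw [show i + p + (d - p) = i + d from by omega, List.append_assoc]
  · simp only [seg_length]
    have : ((d - p : ℕ) : ℚ) = (d : ℚ) - (p : ℚ) := by
      push_cast [Nat.cast_sub hpd]; ring
    rw [this, hr']
    push_cast
    field_simp
    ring

lemma threshold_le (k p d : ℕ) (hk : 4 ≤ k) (hd : 1 ≤ d) (hdp : d ≤ (k - 2) * p) :
    ((k : ℝ) - 1) / ((k : ℝ) - 2) ≤ ((d : ℝ) + (p : ℝ)) / (d : ℝ) := by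
  have hk2 : ((k : ℝ)) - 2 ≥ 2 := by
    have : (4 : ℝ) ≤ (k : ℝ) := by exact_mod_cast hk
    linarith
  have hdr : (0 : ℝ) < (d : ℝ) := by exact_mod_cast hd
  have hdp' : (d : ℝ) ≤ ((k : ℝ) - 2) * (p : ℝ) := by
    have h1 : ((k - 2) * p : ℕ) = (k - 2 : ℕ) * (p : ℕ) := rfl
    have h2 : ((k - 2 : ℕ) : ℝ) = (k : ℝ) - 2 := by
      push_cast [Nat.cast_sub (show 2 ≤ k by omega)]; ring
    calc (d : ℝ) ≤ (((k - 2) * p : ℕ) : ℝ) := by exact_mod_cast hdp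
    _ = ((k : ℝ) - 2) * (p : ℝ) := by push_cast [Nat.cast_sub (show 2 ≤ k by omega)]; ring
  rw [div_le_div_iff₀ (by linarith) hdr]
  nlinarith

/-- Core combinatorial lemma: no infinite word over `k ≥ 4` letters avoids all
undirected powers of exponent `≥ (k-1)/(k-2)`. -/
lemma key_bound {k : ℕ} (hk : 4 ≤ k) (r : ℚ) (w : ℕ → Fin k)
    (hfree : UndirectedFree (r : ℝ) w) :
    ((k : ℝ) - 1) / ((k : ℝ) - 2) ≤ (r : ℝ) := by
  by_contra hcon
  push_neg at hcon
  -- F1 : letters at distance 1..k-2 differ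
  have F1 : ∀ i d : ℕ, 1 ≤ d → d ≤ k - 2 → w i ≠ w (i + d) := by
    intro i d h1 h2 heq
    apply no_pow hfree 1 d i le_rfl h1
      (le_trans hcon.le (threshold_le k 1 d hk h1 (by omega)))
    left
    rw [seg_one, seg_one, heq]
  have F2 : ∀ i d : ℕ, 2 ≤ d → d ≤ 2 * k - 4 → w i = w (i + d) → w (i + 1) = w (i + d + 1) →
      False := by
    intro i d h1 h2 ha hb
    apply no_pow hfree 2 d i (by omega) h1
      (le_trans hcon.le (threshold_le k 2 d hk (by omega) (by omega)))
    left
    rw [seg_two, seg_two, ha, hb]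
  have F3 : ∀ i d : ℕ, 2 ≤ d → d ≤ 2 * k - 4 → w i = w (i + d + 1) → w (i + 1) = w (i + d) →
      False := by
    intro i d h1 h2 ha hb
    apply no_pow hfree 2 d i (by omega) h1
      (le_trans hcon.le (threshold_le k 2 d hk (by omega) (by omega)))
    right
    rw [seg_two, seg_two]
    simp only [List.reverse_cons, List.reverse_nil, List.nil_append, List.cons_append,
      List.singleton_append]
    rw [← ha, ← hb]
  -- window distinctness
  have dist_of : ∀ n : ℕ, w (n + (k - 1)) ≠ w n →
      ∀ j1 j2 : ℕ, j1 < k → j2 < k → w (n + j1) = w (n + j2) → j1 = j2 := by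
    intro n hne
    have aux : ∀ j1 j2 : ℕ, j1 < j2 → j2 < k → w (n + j1) ≠ w (n + j2) := by
      intro j1 j2 hlt hk2 heq
      rcases Nat.lt_or_ge (j2 - j1) (k - 1) with hcase | hcase
      · exact F1 (n + j1) (j2 - j1) (by omega) (by omega)
          (by rw [show n + j1 + (j2 - j1) = n + j2 from by omega]; exact heq)
      · have e1 : j1 = 0 := by omega
        have e2 : j2 = k - 1 := by omega
        apply hne
        rw [e1] at heq
        rw [e2] at heq  -- not needed? keep safe
        simpa using heq.symm
    intro j1 j2 h1 h2 heq
    rcases Nat.lt_trichotomy j1 j2 with h | h | h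
    · exact absurd heq (aux j1 j2 h h2)
    · exact h
    · exact absurd heq.symm (aux j2 j1 h h1)
  have surj : ∀ n : ℕ,
      (∀ j1 j2 : ℕ, j1 < k → j2 < k → w (n + j1) = w (n + j2) → j1 = j2) →
      ∀ v : Fin k, ∃ j : ℕ, j < k ∧ w (n + j) = v := by
    intro n hdist v
    have hinj : Function.Injective (fun j : Fin k => w (n + (j : ℕ))) := by
      intro a b hab
      exact Fin.ext (hdist a b a.isLt b.isLt hab)
    have hsurj := Finite.injective_iff_surjective.mp hinj
    obtain ⟨j, hj⟩ := hsurj v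
    exact ⟨j, j.isLt, hj⟩
  -- step3 : if window at n distinct and w(n+k) = w(n+1), contradiction
  have step3 : ∀ n : ℕ,
      (∀ j1 j2 : ℕ, j1 < k → j2 < k → w (n + j1) = w (n + j2) → j1 = j2) →
      w (n + k) = w (n + 1) → False := by
    intro n hdist hk1
    obtain ⟨j, hj, hjw⟩ := surj n hdist (w (n + k + 1))
    have hj0 : j = 0 := by
      by_contra hj0
      rcases Nat.lt_or_ge j 3 with hj3 | hj3
      · -- j = 1 or 2
        rcases (show j = 1 ∨ j = 2 by omega) with h | h
        · subst h
          -- w(n+1) = w(n+k+1) but w(n+1) = w(n+k): so w(n+k)=w(n+k+1)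
          apply F1 (n + k) 1 le_rfl (by omega)
          rw [show n + k + 1 = n + k + 1 from rfl]
          rw [← hjw, ← hk1]
        · subst h
          -- F2 at i = n+1, d = k-1
          apply F2 (n + 1) (k - 1) (by omega) (by omega)
          · rw [show n + 1 + (k - 1) = n + k from by omega]
            exact hk1.symm
          · rw [show n + 1 + (k - 1) + 1 = n + k + 1 from by omega,
                show n + 1 + 1 = n + 2 from by omega]
            exact hjw
      · -- 3 ≤ j < k : distance k+1-j ∈ [2, k-2]
        apply F1 (n + j) (k + 1 - j) (by omega) (by omega)
        rw [show n + j + (k + 1 - j) = n + k + 1 from by omega]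
        exact hjw
    subst hj0
    -- w n = w (n+k+1); F3 at i = n, d = k
    apply F3 n k (by omega) (by omega)
    · simpa using hjw
    · exact hk1.symm
  -- find a distinct window
  have hwin : ∃ n : ℕ, ∀ j1 j2 : ℕ, j1 < k → j2 < k → w (n + j1) = w (n + j2) → j1 = j2 := by
    by_cases h0 : w (0 + (k - 1)) = w 0
    · refine ⟨1, dist_of 1 ?_⟩
      intro heq
      apply F2 0 (k - 1) (by omega) (by omega)
      · rw [show (0 : ℕ) + (k - 1) = 0 + (k - 1) from rfl]
        exact h0.symm
      · rw [show (0 : ℕ) + (k - 1) + 1 = 1 + (k - 1) from by omega, show (0 : ℕ) + 1 = 1 from rfl]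
        exact heq.symm
    · exact ⟨0, dist_of 0 h0⟩
  obtain ⟨n, hdist⟩ := hwin
  obtain ⟨j, hj, hjw⟩ := surj n hdist (w (n + k))
  have hj01 : j = 0 ∨ j = 1 := by
    by_contra hcon2
    push_neg at hcon2
    apply F1 (n + j) (k - j) (by omega) (by omega)
    rw [show n + j + (k - j) = n + k from by omega]
    exact hjw
  rcases hj01 with hj0 | hj1
  · -- w(n+k) = w(n) : window at n+1 distinct
    subst hj0
    have hk0 : w (n + k) = w n := by symm; simpa using hjw
    have hdist1 : ∀ j1 j2 : ℕ, j1 < k → j2 < k → w (n + 1 + j1) = w (n + 1 + j2) → j1 = j2 := by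
      apply dist_of
      rw [show n + 1 + (k - 1) = n + k from by omega, hk0]
      intro heq
      have := hdist 0 1 (by omega) (by omega) (by simpa using heq)
      omega
    obtain ⟨j', hj', hjw'⟩ := surj (n + 1) hdist1 (w (n + 1 + k))
    have hj01' : j' = 0 ∨ j' = 1 := by
      by_contra hcon2
      push_neg at hcon2
      apply F1 (n + 1 + j') (k - j') (by omega) (by omega)
      rw [show n + 1 + j' + (k - j') = n + 1 + k from by omega]
      exact hjw'
    rcases hj01' with hj0' | hj1'
    · -- w(n+1+k) = w(n+1): F2 at i = n, d = k
      subst hj0'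
      apply F2 n k (by omega) (by omega) hk0.symm
      rw [show n + k + 1 = n + 1 + k from by omega]
      rw [← hjw']
    · subst hj1'
      exact step3 (n + 1) hdist1 (by rw [← hjw'])
  · subst hj1
    exact step3 n hdist (by rw [← hjw])
end URTAux

/-- For every `k ≥ 4`, `URT(k) ≥ (k-1)/(k-2)`. -/
theorem URT_lower_bound (k : ℕ) (hk : 4 ≤ k) :
    ((k : ℝ) - 1) / ((k : ℝ) - 2) ≤ URT k := by
  unfold URT
  apply le_csInf
  · obtain ⟨w, hw⟩ := URTAux.exists_undirected_two_free k hk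
    exact ⟨((2 : ℚ) : ℝ), 2, rfl, by norm_num, by norm_num, w, hw⟩
  · rintro b ⟨r, rfl, h1, h2, w, hfree⟩
    exact URTAux.key_bound hk r w hfree
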